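/- Let S be a commutative parasemifield. Define x ∼ y iff xy⁻¹ ∈ Q_S and yx⁻¹ ∈ Q_S. Then ∼ is a semiring congruence on S, the quotient S/∼ is an additively idempotent parasemifield, and any semiring homomorphism from S to an additively idempotent parasemifield factors through S/∼. -/

import Mathlib

/-- The canonical (pre-)order on a parasemifield: `a ≤ b` iff `a = b` or `∃ c, a + c = b`. -/
def psfLe {S : Type*} [Add S] (a b : S) : Prop := a = b ∨ ∃ c, a + c = b

/-- A subparasemifield: a nonempty subset closed under addition, multiplication and inverses. -/
def IsSubPSF {S : Type*} [Add S] [Mul S] [Inv S] (A : Set S) : Prop :=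
  A.Nonempty ∧ (∀ a ∈ A, ∀ b ∈ A, a + b ∈ A) ∧ (∀ a ∈ A, ∀ b ∈ A, a * b ∈ A) ∧
    ∀ a ∈ A, a⁻¹ ∈ A

/-- The prime parasemifield: the smallest subparasemifield. -/
def primePSF (S : Type*) [Add S] [Mul S] [Inv S] : Set S := ⋂₀ {A | IsSubPSF A}

/-- `Q_S`: the elements lying below some element of the prime parasemifield. -/
def QS (S : Type*) [Add S] [Mul S] [Inv S] : Set S :=
  {a | ∃ q ∈ primePSF S, psfLe a q}

/-- The relation `x ∼ y ↔ xy⁻¹ ∈ Q_S ∧ yx⁻¹ ∈ Q_S`. -/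
def psfRel {S : Type*} [Add S] [Mul S] [Inv S] (x y : S) : Prop :=
  x * y⁻¹ ∈ QS S ∧ y * x⁻¹ ∈ QS S

section Aux

variable {S : Type*} [AddCommSemigroup S] [CommGroup S]

lemma one_mem_primePSF : (1 : S) ∈ primePSF S := by
  intro A hA
  obtain ⟨⟨a, ha⟩, _, hmul, hinv⟩ := hA
  have := hmul a ha a⁻¹ (hinv a ha)
  rwa [mul_inv_cancel] at this

lemma mul_mem_primePSF {q r : S} (hq : q ∈ primePSF S) (hr : r ∈ primePSF S) :
    q * r ∈ primePSF S := fun A hA => hA.2.2.1 q (hq A hA) r (hr A hA)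

lemma add_mem_primePSF {q r : S} (hq : q ∈ primePSF S) (hr : r ∈ primePSF S) :
    q + r ∈ primePSF S := fun A hA => hA.2.1 q (hq A hA) r (hr A hA)

lemma psfLe_refl (a : S) : psfLe a a := Or.inl rfl

lemma psfLe_trans {a b c : S} (h1 : psfLe a b) (h2 : psfLe b c) : psfLe a c := by
  rcases h1 with rfl | ⟨d, rfl⟩
  · exact h2
  · rcases h2 with rfl | ⟨e, rfl⟩
    · exact Or.inr ⟨d, rfl⟩
    · exact Or.inr ⟨d + e, (add_assoc a d e).symm⟩

lemma psfLe_mul (hdist : ∀ a b c : S, a * (b + c) = a * b + a * c)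
    {a b : S} (c : S) (h : psfLe a b) : psfLe (a * c) (b * c) := by
  rcases h with rfl | ⟨d, rfl⟩
  · exact Or.inl rfl
  · exact Or.inr ⟨d * c, by rw [mul_comm (a + d) c, hdist c a d, mul_comm c a, mul_comm c d]⟩

lemma psfLe_add {a b : S} (c : S) (h : psfLe a b) : psfLe (a + c) (b + c) := by
  rcases h with rfl | ⟨d, rfl⟩
  · exact Or.inl rfl
  · exact Or.inr ⟨d, by simp [add_assoc, add_comm, add_left_comm]⟩

lemma qs_mul (hdist : ∀ a b c : S, a * (b + c) = a * b + a * c)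
    {a b : S} (ha : a ∈ QS S) (hb : b ∈ QS S) : a * b ∈ QS S := by
  obtain ⟨q, hq, haq⟩ := ha
  obtain ⟨r, hr, hbr⟩ := hb
  refine ⟨q * r, mul_mem_primePSF hq hr, psfLe_trans (psfLe_mul hdist b haq) ?_⟩
  have := psfLe_mul hdist q hbr
  rwa [mul_comm b q, mul_comm r q] at this

/-- In an additively idempotent parasemifield, if `u ≤ 1` and `u⁻¹ ≤ 1` then `u = 1`. -/
lemma idem_le_one (hdist : ∀ a b c : S, a * (b + c) = a * b + a * c)
    (hid : ∀ t : S, t + t = t) {u : S} (h1 : psfLe u 1) (h2 : psfLe u⁻¹ 1) : u = 1 := by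
  have key : ∀ v : S, psfLe v 1 → v + 1 = 1 := by
    intro v hv
    rcases hv with rfl | ⟨c, hc⟩
    · exact hid 1
    · calc v + 1 = v + (v + c) := by rw [hc]
        _ = (v + v) + c := (add_assoc v v c).symm
        _ = v + c := by rw [hid v]
        _ = 1 := hc
  have h1' : u + 1 = 1 := key u h1
  have h2' : u⁻¹ + 1 = 1 := key u⁻¹ h2
  have : u * (u⁻¹ + 1) = u := by rw [h2', mul_one]
  rw [hdist u u⁻¹ 1, mul_inv_cancel, mul_one] at this
  -- this : 1 + u = u
  calc u = u + 1 := by rw [add_comm, this]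
    _ = 1 := h1'

end Aux

/-- `∼` is a semiring congruence on the parasemifield `S`, the quotient `S/∼` is
additively idempotent, and every semiring homomorphism from `S` to an additively idempotent
parasemifield factors through `S/∼`. -/
theorem psfRel_congruence {S : Type*} [AddCommSemigroup S] [CommGroup S]
    (hdist : ∀ a b c : S, a * (b + c) = a * b + a * c) :
    Equivalence (psfRel (S := S)) ∧
    (∀ x y a : S, psfRel x y → psfRel (x + a) (y + a)) ∧
    (∀ x y a : S, psfRel x y → psfRel (x * a) (y * a)) ∧
    (∀ x : S, psfRel (x + x) x) ∧
    (∀ (T : Type) [AddCommSemigroup T] [CommGroup T],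
      (∀ a b c : T, a * (b + c) = a * b + a * c) →
      (∀ t : T, t + t = t) →
      ∀ φ : S → T, (∀ a b : S, φ (a + b) = φ a + φ b) →
        (∀ a b : S, φ (a * b) = φ a * φ b) →
        ∀ x y : S, psfRel x y → φ x = φ y) := by
  have hone : ∀ x : S, x * x⁻¹ ∈ QS S := fun x =>
    ⟨1, one_mem_primePSF, Or.inl (mul_inv_cancel x)⟩
  -- the key lemma for additive congruence
  have hadd_half : ∀ x y a : S, x * y⁻¹ ∈ QS S → (x + a) * (y + a)⁻¹ ∈ QS S := by
    intro x y a ⟨q, hq, hle⟩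
    -- x ≤ q * y
    have h1 : psfLe x (q * y) := by
      have := psfLe_mul hdist y hle
      rwa [inv_mul_cancel_right] at this
    have h2 : psfLe (x + a) (q * y + a) := psfLe_add a h1
    have h3 : psfLe (q * y + a) ((q + 1) * (y + a)) := by
      refine Or.inr ⟨q * a + y, ?_⟩
      have : (q + 1) * (y + a) = (q * y + y) + (q * a + a) := by
        rw [mul_comm (q + 1) (y + a), hdist (y + a) q 1, mul_one,
          mul_comm (y + a) q, hdist q y a]
        simp [add_assoc, add_comm, add_left_comm]
      rw [this]
      simp [add_assoc, add_comm, add_left_comm]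
    have h4 : psfLe ((x + a) * (y + a)⁻¹) ((q + 1) * (y + a) * (y + a)⁻¹) :=
      psfLe_mul hdist (y + a)⁻¹ (psfLe_trans h2 h3)
    rw [mul_inv_cancel_right] at h4
    exact ⟨q + 1, add_mem_primePSF hq one_mem_primePSF, h4⟩
  refine ⟨⟨fun x => ⟨hone x, hone x⟩, fun h => ⟨h.2, h.1⟩, ?_⟩, ?_, ?_, ?_, ?_⟩
  · -- transitivity
    rintro x y z ⟨h1, h1'⟩ ⟨h2, h2'⟩
    constructor
    · have := qs_mul hdist h1 h2
      rwa [show x * y⁻¹ * (y * z⁻¹) = x * z⁻¹ by group] at this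
    · have := qs_mul hdist h2' h1'
      rwa [show z * y⁻¹ * (y * x⁻¹) = z * x⁻¹ by group] at this
  · -- additive congruence
    rintro x y a ⟨h1, h2⟩
    exact ⟨hadd_half x y a h1, hadd_half y x a h2⟩
  · -- multiplicative congruence
    rintro x y a ⟨h1, h2⟩
    constructor
    · rwa [show x * a * (y * a)⁻¹ = x * y⁻¹ by group]
    · rwa [show y * a * (x * a)⁻¹ = y * x⁻¹ by group]
  · -- idempotency
    intro x
    constructor
    · refine ⟨1 + 1, add_mem_primePSF one_mem_primePSF one_mem_primePSF, Or.inl ?_⟩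
      rw [mul_comm (x + x) x⁻¹, hdist x⁻¹ x x, inv_mul_cancel]
    · refine ⟨1, one_mem_primePSF, Or.inr ⟨x * (x + x)⁻¹, ?_⟩⟩
      rw [← mul_comm ((x+x)⁻¹) x, ← hdist ((x+x)⁻¹) x x, mul_comm]
      exact mul_inv_cancel (x + x)
  · -- universal property
    intro T _ _ hdT hid φ hadd hmul x y ⟨h1, h2⟩
    have hφ1 : φ 1 = 1 := by
      have := hmul 1 1
      rw [one_mul] at this
      exact (mul_eq_left.mp this.symm)
    have hφinv : ∀ a : S, φ a⁻¹ = (φ a)⁻¹ := by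
      intro a
      have h : φ a * φ a⁻¹ = 1 := by rw [← hmul, mul_inv_cancel, hφ1]
      exact eq_inv_of_mul_eq_one_right h
    -- φ maps primePSF S to 1
    have hprime : ∀ q ∈ primePSF S, φ q = 1 := by
      intro q hq
      have hA : IsSubPSF {s : S | φ s = 1} := by
        refine ⟨⟨1, hφ1⟩, ?_, ?_, ?_⟩
        · intro a ha b hb
          simp only [Set.mem_setOf_eq] at *
          rw [hadd, ha, hb, hid]
        · intro a ha b hb
          simp only [Set.mem_setOf_eq] at *
          rw [hmul, ha, hb, mul_one]
        · intro a ha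
          simp only [Set.mem_setOf_eq] at *
          rw [hφinv, ha, inv_one]
      exact hq _ hA
    have hmono : ∀ a b : S, psfLe a b → psfLe (φ a) (φ b) := by
      rintro a b (rfl | ⟨c, rfl⟩)
      · exact Or.inl rfl
      · exact Or.inr ⟨φ c, (hadd a c).symm⟩
    have key : ∀ a b : S, a * b⁻¹ ∈ QS S → psfLe (φ a * (φ b)⁻¹) 1 := by
      rintro a b ⟨q, hq, hle⟩
      have := hmono _ _ hle
      rwa [hmul, hφinv, hprime q hq] at this
    have h1' := key x y h1
    have h2' := key y x h2
    have hinv : (φ x * (φ y)⁻¹)⁻¹ = φ y * (φ x)⁻¹ := by group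
    have := idem_le_one hdT hid h1' (by rw [hinv]; exact h2')
    exact mul_inv_eq_one.mp this
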